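/- Any nontrivial group generated by two elements μ, η with μ² = 1, η³ = 1, and (μη)⁵ = 1 is isomorphic to the alternating group A₅. -/

import Mathlib

set_option maxRecDepth 40000

namespace A5Pres

abbrev Wd := List (Fin 3)

def gen {G : Type*} [Group G] (μ η : G) : Fin 3 → G :=
  fun l => if l = 0 then μ else if l = 1 then η else η⁻¹

def ev {G : Type*} [Group G] (μ η : G) : Wd → G → G
  | [], c => c
  | l :: t, c => gen μ η l * ev μ η t c

section Rules

theorem r0 {G : Type*} [Group G] (μ η : G) (h1 : μ ^ 2 = 1) (h2 : η ^ 3 = 1) (h3 : (μ * η) ^ 5 = 1) (c : G) :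
    ev μ η ([0, 0] : Wd) c = ev μ η ([] : Wd) c := by
  show μ * (μ * c) = c
  rw [← mul_assoc, ← sq, h1, one_mul]

theorem r1 {G : Type*} [Group G] (μ η : G) (h1 : μ ^ 2 = 1) (h2 : η ^ 3 = 1) (h3 : (μ * η) ^ 5 = 1) (c : G) :
    ev μ η ([1, 2] : Wd) c = ev μ η ([] : Wd) c := by
  show η * (η⁻¹ * c) = c
  rw [mul_inv_cancel_left]

theorem r2 {G : Type*} [Group G] (μ η : G) (h1 : μ ^ 2 = 1) (h2 : η ^ 3 = 1) (h3 : (μ * η) ^ 5 = 1) (c : G) :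
    ev μ η ([2, 1] : Wd) c = ev μ η ([] : Wd) c := by
  show η⁻¹ * (η * c) = c
  rw [inv_mul_cancel_left]

theorem r3 {G : Type*} [Group G] (μ η : G) (h1 : μ ^ 2 = 1) (h2 : η ^ 3 = 1) (h3 : (μ * η) ^ 5 = 1) (c : G) :
    ev μ η ([1, 1] : Wd) c = ev μ η ([2] : Wd) c := by
  have hy : η * η = η⁻¹ := eq_inv_of_mul_eq_one_left (by rw [← h2, pow_succ, pow_two])
  show η * (η * c) = η⁻¹ * c
  rw [← mul_assoc, hy]

theorem r4 {G : Type*} [Group G] (μ η : G) (h1 : μ ^ 2 = 1) (h2 : η ^ 3 = 1) (h3 : (μ * η) ^ 5 = 1) (c : G) :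
    ev μ η ([2, 2] : Wd) c = ev μ η ([1] : Wd) c := by
  have hy : η * η = η⁻¹ := eq_inv_of_mul_eq_one_left (by rw [← h2, pow_succ, pow_two])
  have hy2 : η⁻¹ * η⁻¹ = η := by rw [← mul_inv_rev, hy, inv_inv]
  show η⁻¹ * (η⁻¹ * c) = η * c
  rw [← mul_assoc, hy2]

theorem r5 {G : Type*} [Group G] (μ η : G) (h1 : μ ^ 2 = 1) (h2 : η ^ 3 = 1) (h3 : (μ * η) ^ 5 = 1) (c : G) :
    ev μ η ([0, 1, 0, 1, 0, 1, 0, 1, 0, 1] : Wd) c = ev μ η ([] : Wd) c := by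
  have h5 := h3
  rw [pow_succ, pow_succ, pow_succ, pow_succ, pow_one] at h5
  simp only [mul_assoc] at h5
  show μ * (η * (μ * (η * (μ * (η * (μ * (η * (μ * (η * c))))))))) = c
  conv_rhs => rw [← one_mul c, ← h5]
  simp only [mul_assoc]

theorem r6 {G : Type*} [Group G] (μ η : G) (h1 : μ ^ 2 = 1) (h2 : η ^ 3 = 1) (h3 : (μ * η) ^ 5 = 1) (c : G) :
    ev μ η ([1, 0, 1, 0, 1, 0, 1, 0, 1] : Wd) c = ev μ η ([0] : Wd) c := by
  have sa0 : ev μ η ([0, 0, 1, 0, 1, 0, 1, 0, 1, 0, 1] : Wd) c = ev μ η ([1, 0, 1, 0, 1, 0, 1, 0, 1] : Wd) c := r0 μ η h1 h2 h3 (ev μ η ([1, 0, 1, 0, 1, 0, 1, 0, 1] : Wd) c)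
  have sb0 : ev μ η ([0, 0, 1, 0, 1, 0, 1, 0, 1, 0, 1] : Wd) c = ev μ η ([0] : Wd) c := congrArg (fun t : G => gen μ η 0 * (t)) (r5 μ η h1 h2 h3 (ev μ η ([] : Wd) c))
  exact (sa0).symm.trans (sb0)

theorem r7 {G : Type*} [Group G] (μ η : G) (h1 : μ ^ 2 = 1) (h2 : η ^ 3 = 1) (h3 : (μ * η) ^ 5 = 1) (c : G) :
    ev μ η ([0, 1, 0, 1, 0, 1, 0, 1, 0] : Wd) c = ev μ η ([2] : Wd) c := by
  have sa0 : ev μ η ([0, 1, 0, 1, 0, 1, 0, 1, 0, 1, 2] : Wd) c = ev μ η ([0, 1, 0, 1, 0, 1, 0, 1, 0] : Wd) c := congrArg (fun t : G => gen μ η 0 * (gen μ η 1 * (gen μ η 0 * (gen μ η 1 * (gen μ η 0 * (gen μ η 1 * (gen μ η 0 * (gen μ η 1 * (gen μ η 0 * (t)))))))))) (r1 μ η h1 h2 h3 (ev μ η ([] : Wd) c))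
  have sb0 : ev μ η ([0, 1, 0, 1, 0, 1, 0, 1, 0, 1, 2] : Wd) c = ev μ η ([2] : Wd) c := r5 μ η h1 h2 h3 (ev μ η ([2] : Wd) c)
  exact (sa0).symm.trans (sb0)

theorem r8 {G : Type*} [Group G] (μ η : G) (h1 : μ ^ 2 = 1) (h2 : η ^ 3 = 1) (h3 : (μ * η) ^ 5 = 1) (c : G) :
    ev μ η ([1, 0, 1, 0, 1, 0, 1, 0] : Wd) c = ev μ η ([0, 2] : Wd) c := by
  have sa0 : ev μ η ([0, 0, 1, 0, 1, 0, 1, 0, 1, 0] : Wd) c = ev μ η ([1, 0, 1, 0, 1, 0, 1, 0] : Wd) c := r0 μ η h1 h2 h3 (ev μ η ([1, 0, 1, 0, 1, 0, 1, 0] : Wd) c)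
  have sb0 : ev μ η ([0, 0, 1, 0, 1, 0, 1, 0, 1, 0] : Wd) c = ev μ η ([0, 2] : Wd) c := congrArg (fun t : G => gen μ η 0 * (t)) (r7 μ η h1 h2 h3 (ev μ η ([] : Wd) c))
  exact (sa0).symm.trans (sb0)

theorem r9 {G : Type*} [Group G] (μ η : G) (h1 : μ ^ 2 = 1) (h2 : η ^ 3 = 1) (h3 : (μ * η) ^ 5 = 1) (c : G) :
    ev μ η ([0, 1, 0, 1, 0, 1, 0, 1] : Wd) c = ev μ η ([2, 0] : Wd) c := by
  have sa0 : ev μ η ([2, 1, 0, 1, 0, 1, 0, 1, 0, 1] : Wd) c = ev μ η ([0, 1, 0, 1, 0, 1, 0, 1] : Wd) c := r2 μ η h1 h2 h3 (ev μ η ([0, 1, 0, 1, 0, 1, 0, 1] : Wd) c)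
  have sb0 : ev μ η ([2, 1, 0, 1, 0, 1, 0, 1, 0, 1] : Wd) c = ev μ η ([2, 0] : Wd) c := congrArg (fun t : G => gen μ η 2 * (t)) (r6 μ η h1 h2 h3 (ev μ η ([] : Wd) c))
  exact (sa0).symm.trans (sb0)

theorem r10 {G : Type*} [Group G] (μ η : G) (h1 : μ ^ 2 = 1) (h2 : η ^ 3 = 1) (h3 : (μ * η) ^ 5 = 1) (c : G) :
    ev μ η ([0, 1, 0, 1, 0, 1, 0] : Wd) c = ev μ η ([2, 0, 2] : Wd) c := by
  have sa0 : ev μ η ([0, 1, 0, 1, 0, 1, 0, 1, 0, 1, 0, 1, 0, 1, 0, 1, 0] : Wd) c = ev μ η ([0, 1, 0, 1, 0, 1, 0] : Wd) c := r5 μ η h1 h2 h3 (ev μ η ([0, 1, 0, 1, 0, 1, 0] : Wd) c)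
  have sb0 : ev μ η ([0, 1, 0, 1, 0, 1, 0, 1, 0, 1, 0, 1, 0, 1, 0, 1, 0] : Wd) c = ev μ η ([0, 1, 0, 1, 0, 1, 0, 1, 2] : Wd) c := congrArg (fun t : G => gen μ η 0 * (gen μ η 1 * (gen μ η 0 * (gen μ η 1 * (gen μ η 0 * (gen μ η 1 * (gen μ η 0 * (gen μ η 1 * (t))))))))) (r7 μ η h1 h2 h3 (ev μ η ([] : Wd) c))
  have sb1 : ev μ η ([0, 1, 0, 1, 0, 1, 0, 1, 2] : Wd) c = ev μ η ([2, 0, 2] : Wd) c := r9 μ η h1 h2 h3 (ev μ η ([2] : Wd) c)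
  exact (sa0).symm.trans ((sb0).trans sb1)

theorem r11 {G : Type*} [Group G] (μ η : G) (h1 : μ ^ 2 = 1) (h2 : η ^ 3 = 1) (h3 : (μ * η) ^ 5 = 1) (c : G) :
    ev μ η ([1, 0, 1, 0, 1, 0, 1] : Wd) c = ev μ η ([0, 2, 0] : Wd) c := by
  have sa0 : ev μ η ([1, 0, 1, 0, 1, 0, 1, 0, 1, 0, 1, 0, 1, 0, 1, 0, 1] : Wd) c = ev μ η ([0, 0, 1, 0, 1, 0, 1, 0, 1] : Wd) c := r6 μ η h1 h2 h3 (ev μ η ([0, 1, 0, 1, 0, 1, 0, 1] : Wd) c)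
  have sa1 : ev μ η ([0, 0, 1, 0, 1, 0, 1, 0, 1] : Wd) c = ev μ η ([1, 0, 1, 0, 1, 0, 1] : Wd) c := r0 μ η h1 h2 h3 (ev μ η ([1, 0, 1, 0, 1, 0, 1] : Wd) c)
  have sb0 : ev μ η ([1, 0, 1, 0, 1, 0, 1, 0, 1, 0, 1, 0, 1, 0, 1, 0, 1] : Wd) c = ev μ η ([1, 0, 1, 0, 1, 0, 1, 0, 0] : Wd) c := congrArg (fun t : G => gen μ η 1 * (gen μ η 0 * (gen μ η 1 * (gen μ η 0 * (gen μ η 1 * (gen μ η 0 * (gen μ η 1 * (gen μ η 0 * (t))))))))) (r6 μ η h1 h2 h3 (ev μ η ([] : Wd) c))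
  have sb1 : ev μ η ([1, 0, 1, 0, 1, 0, 1, 0, 0] : Wd) c = ev μ η ([0, 2, 0] : Wd) c := r8 μ η h1 h2 h3 (ev μ η ([0] : Wd) c)
  exact ((sa0).trans sa1).symm.trans ((sb0).trans sb1)

theorem r12 {G : Type*} [Group G] (μ η : G) (h1 : μ ^ 2 = 1) (h2 : η ^ 3 = 1) (h3 : (μ * η) ^ 5 = 1) (c : G) :
    ev μ η ([1, 0, 1, 0, 1, 0] : Wd) c = ev μ η ([0, 2, 0, 2] : Wd) c := by
  have sa0 : ev μ η ([1, 0, 1, 0, 1, 0, 1, 0, 1, 0, 1, 0, 1, 0, 1, 0] : Wd) c = ev μ η ([0, 0, 1, 0, 1, 0, 1, 0] : Wd) c := r6 μ η h1 h2 h3 (ev μ η ([0, 1, 0, 1, 0, 1, 0] : Wd) c)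
  have sa1 : ev μ η ([0, 0, 1, 0, 1, 0, 1, 0] : Wd) c = ev μ η ([1, 0, 1, 0, 1, 0] : Wd) c := r0 μ η h1 h2 h3 (ev μ η ([1, 0, 1, 0, 1, 0] : Wd) c)
  have sb0 : ev μ η ([1, 0, 1, 0, 1, 0, 1, 0, 1, 0, 1, 0, 1, 0, 1, 0] : Wd) c = ev μ η ([1, 0, 1, 0, 1, 0, 1, 2] : Wd) c := congrArg (fun t : G => gen μ η 1 * (gen μ η 0 * (gen μ η 1 * (gen μ η 0 * (gen μ η 1 * (gen μ η 0 * (gen μ η 1 * (t)))))))) (r7 μ η h1 h2 h3 (ev μ η ([] : Wd) c))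
  have sb1 : ev μ η ([1, 0, 1, 0, 1, 0, 1, 2] : Wd) c = ev μ η ([0, 2, 0, 2] : Wd) c := r11 μ η h1 h2 h3 (ev μ η ([2] : Wd) c)
  exact ((sa0).trans sa1).symm.trans ((sb0).trans sb1)

theorem r13 {G : Type*} [Group G] (μ η : G) (h1 : μ ^ 2 = 1) (h2 : η ^ 3 = 1) (h3 : (μ * η) ^ 5 = 1) (c : G) :
    ev μ η ([0, 1, 0, 1, 0, 1] : Wd) c = ev μ η ([2, 0, 2, 0] : Wd) c := by
  have sa0 : ev μ η ([0, 1, 0, 1, 0, 1, 0, 1, 0, 1, 0, 1, 0, 1, 0, 1] : Wd) c = ev μ η ([2, 1, 0, 1, 0, 1, 0, 1] : Wd) c := r7 μ η h1 h2 h3 (ev μ η ([1, 0, 1, 0, 1, 0, 1] : Wd) c)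
  have sa1 : ev μ η ([2, 1, 0, 1, 0, 1, 0, 1] : Wd) c = ev μ η ([0, 1, 0, 1, 0, 1] : Wd) c := r2 μ η h1 h2 h3 (ev μ η ([0, 1, 0, 1, 0, 1] : Wd) c)
  have sb0 : ev μ η ([0, 1, 0, 1, 0, 1, 0, 1, 0, 1, 0, 1, 0, 1, 0, 1] : Wd) c = ev μ η ([0, 1, 0, 1, 0, 1, 0, 0] : Wd) c := congrArg (fun t : G => gen μ η 0 * (gen μ η 1 * (gen μ η 0 * (gen μ η 1 * (gen μ η 0 * (gen μ η 1 * (gen μ η 0 * (t)))))))) (r6 μ η h1 h2 h3 (ev μ η ([] : Wd) c))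
  have sb1 : ev μ η ([0, 1, 0, 1, 0, 1, 0, 0] : Wd) c = ev μ η ([2, 0, 2, 0] : Wd) c := r10 μ η h1 h2 h3 (ev μ η ([0] : Wd) c)
  exact ((sa0).trans sa1).symm.trans ((sb0).trans sb1)

theorem r14 {G : Type*} [Group G] (μ η : G) (h1 : μ ^ 2 = 1) (h2 : η ^ 3 = 1) (h3 : (μ * η) ^ 5 = 1) (c : G) :
    ev μ η ([2, 0, 2, 0, 2] : Wd) c = ev μ η ([0, 1, 0, 1, 0] : Wd) c := by
  have sa0 : ev μ η ([0, 1, 0, 1, 0, 1, 0, 1, 0, 1, 0, 1, 0, 1, 0] : Wd) c = ev μ η ([0, 1, 0, 1, 0, 1, 2] : Wd) c := congrArg (fun t : G => gen μ η 0 * (gen μ η 1 * (gen μ η 0 * (gen μ η 1 * (gen μ η 0 * (gen μ η 1 * (t))))))) (r7 μ η h1 h2 h3 (ev μ η ([] : Wd) c))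
  have sa1 : ev μ η ([0, 1, 0, 1, 0, 1, 2] : Wd) c = ev μ η ([2, 0, 2, 0, 2] : Wd) c := r13 μ η h1 h2 h3 (ev μ η ([2] : Wd) c)
  have sb0 : ev μ η ([0, 1, 0, 1, 0, 1, 0, 1, 0, 1, 0, 1, 0, 1, 0] : Wd) c = ev μ η ([2, 1, 0, 1, 0, 1, 0] : Wd) c := r7 μ η h1 h2 h3 (ev μ η ([1, 0, 1, 0, 1, 0] : Wd) c)
  have sb1 : ev μ η ([2, 1, 0, 1, 0, 1, 0] : Wd) c = ev μ η ([0, 1, 0, 1, 0] : Wd) c := r2 μ η h1 h2 h3 (ev μ η ([0, 1, 0, 1, 0] : Wd) c)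
  exact ((sa0).trans sa1).symm.trans ((sb0).trans sb1)

theorem r15 {G : Type*} [Group G] (μ η : G) (h1 : μ ^ 2 = 1) (h2 : η ^ 3 = 1) (h3 : (μ * η) ^ 5 = 1) (c : G) :
    ev μ η ([1, 0, 1, 0, 1] : Wd) c = ev μ η ([0, 2, 0, 2, 0] : Wd) c := by
  have sa0 : ev μ η ([0, 0, 1, 0, 1, 0, 1] : Wd) c = ev μ η ([1, 0, 1, 0, 1] : Wd) c := r0 μ η h1 h2 h3 (ev μ η ([1, 0, 1, 0, 1] : Wd) c)
  have sb0 : ev μ η ([0, 0, 1, 0, 1, 0, 1] : Wd) c = ev μ η ([0, 2, 0, 2, 0] : Wd) c := congrArg (fun t : G => gen μ η 0 * (t)) (r13 μ η h1 h2 h3 (ev μ η ([] : Wd) c))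
  exact (sa0).symm.trans (sb0)

theorem r16 {G : Type*} [Group G] (μ η : G) (h1 : μ ^ 2 = 1) (h2 : η ^ 3 = 1) (h3 : (μ * η) ^ 5 = 1) (c : G) :
    ev μ η ([2, 0, 1, 0, 1, 0] : Wd) c = ev μ η ([1, 0, 2, 0, 2] : Wd) c := by
  have sa0 : ev μ η ([1, 1, 0, 1, 0, 1, 0] : Wd) c = ev μ η ([2, 0, 1, 0, 1, 0] : Wd) c := r3 μ η h1 h2 h3 (ev μ η ([0, 1, 0, 1, 0] : Wd) c)
  have sb0 : ev μ η ([1, 1, 0, 1, 0, 1, 0] : Wd) c = ev μ η ([1, 0, 2, 0, 2] : Wd) c := congrArg (fun t : G => gen μ η 1 * (t)) (r12 μ η h1 h2 h3 (ev μ η ([] : Wd) c))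
  exact (sa0).symm.trans (sb0)

theorem r17 {G : Type*} [Group G] (μ η : G) (h1 : μ ^ 2 = 1) (h2 : η ^ 3 = 1) (h3 : (μ * η) ^ 5 = 1) (c : G) :
    ev μ η ([0, 1, 0, 1, 0, 2] : Wd) c = ev μ η ([2, 0, 2, 0, 1] : Wd) c := by
  have sa0 : ev μ η ([0, 1, 0, 1, 0, 1, 1] : Wd) c = ev μ η ([0, 1, 0, 1, 0, 2] : Wd) c := congrArg (fun t : G => gen μ η 0 * (gen μ η 1 * (gen μ η 0 * (gen μ η 1 * (gen μ η 0 * (t)))))) (r3 μ η h1 h2 h3 (ev μ η ([] : Wd) c))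
  have sb0 : ev μ η ([0, 1, 0, 1, 0, 1, 1] : Wd) c = ev μ η ([2, 0, 2, 0, 1] : Wd) c := r13 μ η h1 h2 h3 (ev μ η ([1] : Wd) c)
  exact (sa0).symm.trans (sb0)

theorem r18 {G : Type*} [Group G] (μ η : G) (h1 : μ ^ 2 = 1) (h2 : η ^ 3 = 1) (h3 : (μ * η) ^ 5 = 1) (c : G) :
    ev μ η ([0, 2, 0, 2, 0, 1] : Wd) c = ev μ η ([1, 0, 1, 0, 2] : Wd) c := by
  have sa0 : ev μ η ([0, 0, 1, 0, 1, 0, 2] : Wd) c = ev μ η ([0, 2, 0, 2, 0, 1] : Wd) c := congrArg (fun t : G => gen μ η 0 * (t)) (r17 μ η h1 h2 h3 (ev μ η ([] : Wd) c))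
  have sb0 : ev μ η ([0, 0, 1, 0, 1, 0, 2] : Wd) c = ev μ η ([1, 0, 1, 0, 2] : Wd) c := r0 μ η h1 h2 h3 (ev μ η ([1, 0, 1, 0, 2] : Wd) c)
  exact (sa0).symm.trans (sb0)

theorem r19 {G : Type*} [Group G] (μ η : G) (h1 : μ ^ 2 = 1) (h2 : η ^ 3 = 1) (h3 : (μ * η) ^ 5 = 1) (c : G) :
    ev μ η ([1, 0, 2, 0, 2, 0] : Wd) c = ev μ η ([2, 0, 1, 0, 1] : Wd) c := by
  have sa0 : ev μ η ([1, 1, 0, 1, 0, 1] : Wd) c = ev μ η ([1, 0, 2, 0, 2, 0] : Wd) c := congrArg (fun t : G => gen μ η 1 * (t)) (r15 μ η h1 h2 h3 (ev μ η ([] : Wd) c))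
  have sb0 : ev μ η ([1, 1, 0, 1, 0, 1] : Wd) c = ev μ η ([2, 0, 1, 0, 1] : Wd) c := r3 μ η h1 h2 h3 (ev μ η ([0, 1, 0, 1] : Wd) c)
  exact (sa0).symm.trans (sb0)

theorem r20 {G : Type*} [Group G] (μ η : G) (h1 : μ ^ 2 = 1) (h2 : η ^ 3 = 1) (h3 : (μ * η) ^ 5 = 1) (c : G) :
    ev μ η ([2, 0, 2, 0, 1, 0, 2, 0, 2] : Wd) c = ev μ η ([0, 1, 0, 2, 0, 1, 0] : Wd) c := by
  have sa0 : ev μ η ([2, 0, 2, 0, 2, 0, 1, 0, 1, 0] : Wd) c = ev μ η ([2, 0, 2, 0, 1, 0, 2, 0, 2] : Wd) c := congrArg (fun t : G => gen μ η 2 * (gen μ η 0 * (gen μ η 2 * (gen μ η 0 * (t))))) (r16 μ η h1 h2 h3 (ev μ η ([] : Wd) c))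
  have sb0 : ev μ η ([2, 0, 2, 0, 2, 0, 1, 0, 1, 0] : Wd) c = ev μ η ([0, 1, 0, 1, 0, 0, 1, 0, 1, 0] : Wd) c := r14 μ η h1 h2 h3 (ev μ η ([0, 1, 0, 1, 0] : Wd) c)
  have sb1 : ev μ η ([0, 1, 0, 1, 0, 0, 1, 0, 1, 0] : Wd) c = ev μ η ([0, 1, 0, 1, 1, 0, 1, 0] : Wd) c := congrArg (fun t : G => gen μ η 0 * (gen μ η 1 * (gen μ η 0 * (gen μ η 1 * (t))))) (r0 μ η h1 h2 h3 (ev μ η ([1, 0, 1, 0] : Wd) c))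
  have sb2 : ev μ η ([0, 1, 0, 1, 1, 0, 1, 0] : Wd) c = ev μ η ([0, 1, 0, 2, 0, 1, 0] : Wd) c := congrArg (fun t : G => gen μ η 0 * (gen μ η 1 * (gen μ η 0 * (t)))) (r3 μ η h1 h2 h3 (ev μ η ([0, 1, 0] : Wd) c))
  exact (sa0).symm.trans (((sb0).trans sb1).trans sb2)

theorem r21 {G : Type*} [Group G] (μ η : G) (h1 : μ ^ 2 = 1) (h2 : η ^ 3 = 1) (h3 : (μ * η) ^ 5 = 1) (c : G) :
    ev μ η ([1, 0, 1, 0, 2, 0, 1, 0] : Wd) c = ev μ η ([0, 2, 0, 1, 0, 2, 0, 2] : Wd) c := by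
  have sa0 : ev μ η ([1, 2, 0, 2, 0, 1, 0, 2, 0, 2] : Wd) c = ev μ η ([1, 0, 1, 0, 2, 0, 1, 0] : Wd) c := congrArg (fun t : G => gen μ η 1 * (t)) (r20 μ η h1 h2 h3 (ev μ η ([] : Wd) c))
  have sb0 : ev μ η ([1, 2, 0, 2, 0, 1, 0, 2, 0, 2] : Wd) c = ev μ η ([0, 2, 0, 1, 0, 2, 0, 2] : Wd) c := r1 μ η h1 h2 h3 (ev μ η ([0, 2, 0, 1, 0, 2, 0, 2] : Wd) c)
  exact (sa0).symm.trans (sb0)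

theorem r22 {G : Type*} [Group G] (μ η : G) (h1 : μ ^ 2 = 1) (h2 : η ^ 3 = 1) (h3 : (μ * η) ^ 5 = 1) (c : G) :
    ev μ η ([1, 0, 2, 0, 1, 0, 2, 0, 2] : Wd) c = ev μ η ([2, 0, 1, 0, 2, 0, 1, 0] : Wd) c := by
  have sa0 : ev μ η ([2, 2, 0, 2, 0, 1, 0, 2, 0, 2] : Wd) c = ev μ η ([1, 0, 2, 0, 1, 0, 2, 0, 2] : Wd) c := r4 μ η h1 h2 h3 (ev μ η ([0, 2, 0, 1, 0, 2, 0, 2] : Wd) c)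
  have sb0 : ev μ η ([2, 2, 0, 2, 0, 1, 0, 2, 0, 2] : Wd) c = ev μ η ([2, 0, 1, 0, 2, 0, 1, 0] : Wd) c := congrArg (fun t : G => gen μ η 2 * (t)) (r20 μ η h1 h2 h3 (ev μ η ([] : Wd) c))
  exact (sa0).symm.trans (sb0)

theorem r23 {G : Type*} [Group G] (μ η : G) (h1 : μ ^ 2 = 1) (h2 : η ^ 3 = 1) (h3 : (μ * η) ^ 5 = 1) (c : G) :
    ev μ η ([2, 0, 1, 0, 2, 0, 1, 0, 2] : Wd) c = ev μ η ([1, 0, 2, 0, 1, 0, 2, 0, 1] : Wd) c := by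
  have sa0 : ev μ η ([2, 0, 1, 0, 1, 0, 2, 0, 2, 0, 1] : Wd) c = ev μ η ([2, 0, 1, 0, 1, 1, 0, 1, 0, 2] : Wd) c := congrArg (fun t : G => gen μ η 2 * (gen μ η 0 * (gen μ η 1 * (gen μ η 0 * (gen μ η 1 * (t)))))) (r18 μ η h1 h2 h3 (ev μ η ([] : Wd) c))
  have sa1 : ev μ η ([2, 0, 1, 0, 1, 1, 0, 1, 0, 2] : Wd) c = ev μ η ([2, 0, 1, 0, 2, 0, 1, 0, 2] : Wd) c := congrArg (fun t : G => gen μ η 2 * (gen μ η 0 * (gen μ η 1 * (gen μ η 0 * (t))))) (r3 μ η h1 h2 h3 (ev μ η ([0, 1, 0, 2] : Wd) c))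
  have sb0 : ev μ η ([2, 0, 1, 0, 1, 0, 2, 0, 2, 0, 1] : Wd) c = ev μ η ([1, 0, 2, 0, 2, 2, 0, 2, 0, 1] : Wd) c := r16 μ η h1 h2 h3 (ev μ η ([2, 0, 2, 0, 1] : Wd) c)
  have sb1 : ev μ η ([1, 0, 2, 0, 2, 2, 0, 2, 0, 1] : Wd) c = ev μ η ([1, 0, 2, 0, 1, 0, 2, 0, 1] : Wd) c := congrArg (fun t : G => gen μ η 1 * (gen μ η 0 * (gen μ η 2 * (gen μ η 0 * (t))))) (r4 μ η h1 h2 h3 (ev μ η ([0, 2, 0, 1] : Wd) c))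
  exact ((sa0).trans sa1).symm.trans ((sb0).trans sb1)

theorem r24 {G : Type*} [Group G] (μ η : G) (h1 : μ ^ 2 = 1) (h2 : η ^ 3 = 1) (h3 : (μ * η) ^ 5 = 1) (c : G) :
    ev μ η ([2, 0, 1, 0, 2, 0, 1, 0, 1] : Wd) c = ev μ η ([1, 0, 2, 0, 1, 0, 2, 0] : Wd) c := by
  have sa0 : ev μ η ([2, 0, 1, 0, 1, 0, 2, 0, 2, 0] : Wd) c = ev μ η ([2, 0, 1, 0, 2, 0, 1, 0, 1] : Wd) c := congrArg (fun t : G => gen μ η 2 * (gen μ η 0 * (gen μ η 1 * (gen μ η 0 * (t))))) (r19 μ η h1 h2 h3 (ev μ η ([] : Wd) c))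
  have sb0 : ev μ η ([2, 0, 1, 0, 1, 0, 2, 0, 2, 0] : Wd) c = ev μ η ([1, 0, 2, 0, 2, 2, 0, 2, 0] : Wd) c := r16 μ η h1 h2 h3 (ev μ η ([2, 0, 2, 0] : Wd) c)
  have sb1 : ev μ η ([1, 0, 2, 0, 2, 2, 0, 2, 0] : Wd) c = ev μ η ([1, 0, 2, 0, 1, 0, 2, 0] : Wd) c := congrArg (fun t : G => gen μ η 1 * (gen μ η 0 * (gen μ η 2 * (gen μ η 0 * (t))))) (r4 μ η h1 h2 h3 (ev μ η ([0, 2, 0] : Wd) c))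
  exact (sa0).symm.trans ((sb0).trans sb1)

theorem r25 {G : Type*} [Group G] (μ η : G) (h1 : μ ^ 2 = 1) (h2 : η ^ 3 = 1) (h3 : (μ * η) ^ 5 = 1) (c : G) :
    ev μ η ([2, 0, 2, 0, 1, 0, 2, 0, 1] : Wd) c = ev μ η ([0, 1, 0, 2, 0, 1, 0, 2] : Wd) c := by
  have sa0 : ev μ η ([0, 1, 0, 1, 0, 2, 0, 2, 0, 1] : Wd) c = ev μ η ([2, 0, 2, 0, 1, 0, 2, 0, 1] : Wd) c := r17 μ η h1 h2 h3 (ev μ η ([0, 2, 0, 1] : Wd) c)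
  have sb0 : ev μ η ([0, 1, 0, 1, 0, 2, 0, 2, 0, 1] : Wd) c = ev μ η ([0, 1, 0, 1, 1, 0, 1, 0, 2] : Wd) c := congrArg (fun t : G => gen μ η 0 * (gen μ η 1 * (gen μ η 0 * (gen μ η 1 * (t))))) (r18 μ η h1 h2 h3 (ev μ η ([] : Wd) c))
  have sb1 : ev μ η ([0, 1, 0, 1, 1, 0, 1, 0, 2] : Wd) c = ev μ η ([0, 1, 0, 2, 0, 1, 0, 2] : Wd) c := congrArg (fun t : G => gen μ η 0 * (gen μ η 1 * (gen μ η 0 * (t)))) (r3 μ η h1 h2 h3 (ev μ η ([0, 1, 0, 2] : Wd) c))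
  exact (sa0).symm.trans ((sb0).trans sb1)

theorem r26 {G : Type*} [Group G] (μ η : G) (h1 : μ ^ 2 = 1) (h2 : η ^ 3 = 1) (h3 : (μ * η) ^ 5 = 1) (c : G) :
    ev μ η ([2, 0, 2, 0, 1, 0, 2, 0] : Wd) c = ev μ η ([0, 1, 0, 2, 0, 1, 0, 1] : Wd) c := by
  have sa0 : ev μ η ([0, 1, 0, 1, 0, 2, 0, 2, 0] : Wd) c = ev μ η ([2, 0, 2, 0, 1, 0, 2, 0] : Wd) c := r17 μ η h1 h2 h3 (ev μ η ([0, 2, 0] : Wd) c)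
  have sb0 : ev μ η ([0, 1, 0, 1, 0, 2, 0, 2, 0] : Wd) c = ev μ η ([0, 1, 0, 2, 0, 1, 0, 1] : Wd) c := congrArg (fun t : G => gen μ η 0 * (gen μ η 1 * (gen μ η 0 * (t)))) (r19 μ η h1 h2 h3 (ev μ η ([] : Wd) c))
  exact (sa0).symm.trans (sb0)

theorem r27 {G : Type*} [Group G] (μ η : G) (h1 : μ ^ 2 = 1) (h2 : η ^ 3 = 1) (h3 : (μ * η) ^ 5 = 1) (c : G) :
    ev μ η ([0, 1, 0, 2, 0, 1, 0, 2, 0, 1, 0] : Wd) c = ev μ η ([1, 0, 2, 0, 1, 0, 2, 0, 1] : Wd) c := by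
  have sa0 : ev μ η ([0, 1, 0, 1, 0, 2, 0, 1, 0, 2, 0, 2] : Wd) c = ev μ η ([0, 1, 0, 2, 0, 1, 0, 2, 0, 1, 0] : Wd) c := congrArg (fun t : G => gen μ η 0 * (gen μ η 1 * (gen μ η 0 * (t)))) (r22 μ η h1 h2 h3 (ev μ η ([] : Wd) c))
  have sb0 : ev μ η ([0, 1, 0, 1, 0, 2, 0, 1, 0, 2, 0, 2] : Wd) c = ev μ η ([2, 0, 2, 0, 1, 0, 1, 0, 2, 0, 2] : Wd) c := r17 μ η h1 h2 h3 (ev μ η ([0, 1, 0, 2, 0, 2] : Wd) c)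
  have sb1 : ev μ η ([2, 0, 2, 0, 1, 0, 1, 0, 2, 0, 2] : Wd) c = ev μ η ([2, 0, 1, 0, 2, 0, 2, 2, 0, 2] : Wd) c := congrArg (fun t : G => gen μ η 2 * (gen μ η 0 * (t))) (r16 μ η h1 h2 h3 (ev μ η ([2, 0, 2] : Wd) c))
  have sb2 : ev μ η ([2, 0, 1, 0, 2, 0, 2, 2, 0, 2] : Wd) c = ev μ η ([2, 0, 1, 0, 2, 0, 1, 0, 2] : Wd) c := congrArg (fun t : G => gen μ η 2 * (gen μ η 0 * (gen μ η 1 * (gen μ η 0 * (gen μ η 2 * (gen μ η 0 * (t))))))) (r4 μ η h1 h2 h3 (ev μ η ([0, 2] : Wd) c))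
  have sb3 : ev μ η ([2, 0, 1, 0, 2, 0, 1, 0, 2] : Wd) c = ev μ η ([1, 0, 2, 0, 1, 0, 2, 0, 1] : Wd) c := r23 μ η h1 h2 h3 (ev μ η ([] : Wd) c)
  exact (sa0).symm.trans ((((sb0).trans sb1).trans sb2).trans sb3)

theorem r28 {G : Type*} [Group G] (μ η : G) (h1 : μ ^ 2 = 1) (h2 : η ^ 3 = 1) (h3 : (μ * η) ^ 5 = 1) (c : G) :
    ev μ η ([1, 0, 2, 0, 1, 0, 2, 0, 1, 0] : Wd) c = ev μ η ([0, 1, 0, 2, 0, 1, 0, 2, 0, 1] : Wd) c := by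
  have sa0 : ev μ η ([1, 0, 1, 0, 2, 0, 1, 0, 2, 0, 2] : Wd) c = ev μ η ([1, 0, 2, 0, 1, 0, 2, 0, 1, 0] : Wd) c := congrArg (fun t : G => gen μ η 1 * (gen μ η 0 * (t))) (r22 μ η h1 h2 h3 (ev μ η ([] : Wd) c))
  have sb0 : ev μ η ([1, 0, 1, 0, 2, 0, 1, 0, 2, 0, 2] : Wd) c = ev μ η ([0, 2, 0, 1, 0, 2, 0, 2, 2, 0, 2] : Wd) c := r21 μ η h1 h2 h3 (ev μ η ([2, 0, 2] : Wd) c)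
  have sb1 : ev μ η ([0, 2, 0, 1, 0, 2, 0, 2, 2, 0, 2] : Wd) c = ev μ η ([0, 2, 0, 1, 0, 2, 0, 1, 0, 2] : Wd) c := congrArg (fun t : G => gen μ η 0 * (gen μ η 2 * (gen μ η 0 * (gen μ η 1 * (gen μ η 0 * (gen μ η 2 * (gen μ η 0 * (t)))))))) (r4 μ η h1 h2 h3 (ev μ η ([0, 2] : Wd) c))
  have sb2 : ev μ η ([0, 2, 0, 1, 0, 2, 0, 1, 0, 2] : Wd) c = ev μ η ([0, 1, 0, 2, 0, 1, 0, 2, 0, 1] : Wd) c := congrArg (fun t : G => gen μ η 0 * (t)) (r23 μ η h1 h2 h3 (ev μ η ([] : Wd) c))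
  exact (sa0).symm.trans (((sb0).trans sb1).trans sb2)

def rules : List (Wd × Wd) := [
  (([0, 0] : Wd), ([] : Wd)),
  (([1, 2] : Wd), ([] : Wd)),
  (([2, 1] : Wd), ([] : Wd)),
  (([1, 1] : Wd), ([2] : Wd)),
  (([2, 2] : Wd), ([1] : Wd)),
  (([0, 1, 0, 1, 0, 1, 0, 1, 0, 1] : Wd), ([] : Wd)),
  (([1, 0, 1, 0, 1, 0, 1, 0, 1] : Wd), ([0] : Wd)),
  (([0, 1, 0, 1, 0, 1, 0, 1, 0] : Wd), ([2] : Wd)),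
  (([1, 0, 1, 0, 1, 0, 1, 0] : Wd), ([0, 2] : Wd)),
  (([0, 1, 0, 1, 0, 1, 0, 1] : Wd), ([2, 0] : Wd)),
  (([0, 1, 0, 1, 0, 1, 0] : Wd), ([2, 0, 2] : Wd)),
  (([1, 0, 1, 0, 1, 0, 1] : Wd), ([0, 2, 0] : Wd)),
  (([1, 0, 1, 0, 1, 0] : Wd), ([0, 2, 0, 2] : Wd)),
  (([0, 1, 0, 1, 0, 1] : Wd), ([2, 0, 2, 0] : Wd)),
  (([2, 0, 2, 0, 2] : Wd), ([0, 1, 0, 1, 0] : Wd)),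
  (([1, 0, 1, 0, 1] : Wd), ([0, 2, 0, 2, 0] : Wd)),
  (([2, 0, 1, 0, 1, 0] : Wd), ([1, 0, 2, 0, 2] : Wd)),
  (([0, 1, 0, 1, 0, 2] : Wd), ([2, 0, 2, 0, 1] : Wd)),
  (([0, 2, 0, 2, 0, 1] : Wd), ([1, 0, 1, 0, 2] : Wd)),
  (([1, 0, 2, 0, 2, 0] : Wd), ([2, 0, 1, 0, 1] : Wd)),
  (([2, 0, 2, 0, 1, 0, 2, 0, 2] : Wd), ([0, 1, 0, 2, 0, 1, 0] : Wd)),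
  (([1, 0, 1, 0, 2, 0, 1, 0] : Wd), ([0, 2, 0, 1, 0, 2, 0, 2] : Wd)),
  (([1, 0, 2, 0, 1, 0, 2, 0, 2] : Wd), ([2, 0, 1, 0, 2, 0, 1, 0] : Wd)),
  (([2, 0, 1, 0, 2, 0, 1, 0, 2] : Wd), ([1, 0, 2, 0, 1, 0, 2, 0, 1] : Wd)),
  (([2, 0, 1, 0, 2, 0, 1, 0, 1] : Wd), ([1, 0, 2, 0, 1, 0, 2, 0] : Wd)),
  (([2, 0, 2, 0, 1, 0, 2, 0, 1] : Wd), ([0, 1, 0, 2, 0, 1, 0, 2] : Wd)),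
  (([2, 0, 2, 0, 1, 0, 2, 0] : Wd), ([0, 1, 0, 2, 0, 1, 0, 1] : Wd)),
  (([0, 1, 0, 2, 0, 1, 0, 2, 0, 1, 0] : Wd), ([1, 0, 2, 0, 1, 0, 2, 0, 1] : Wd)),
  (([1, 0, 2, 0, 1, 0, 2, 0, 1, 0] : Wd), ([0, 1, 0, 2, 0, 1, 0, 2, 0, 1] : Wd))
]

theorem rulesSound {G : Type*} [Group G] (μ η : G) (h1 : μ ^ 2 = 1) (h2 : η ^ 3 = 1)
    (h3 : (μ * η) ^ 5 = 1) : ∀ r ∈ rules, ∀ c : G, ev μ η r.1 c = ev μ η r.2 c := by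
  intro r hr
  simp only [rules, List.mem_cons, List.not_mem_nil, or_false] at hr
  rcases hr with rfl|rfl|rfl|rfl|rfl|rfl|rfl|rfl|rfl|rfl|rfl|rfl|rfl|rfl|rfl|rfl|rfl|rfl|rfl|rfl|rfl|rfl|rfl|rfl|rfl|rfl|rfl|rfl|rfl
  exacts [r0 μ η h1 h2 h3, r1 μ η h1 h2 h3, r2 μ η h1 h2 h3, r3 μ η h1 h2 h3, r4 μ η h1 h2 h3, r5 μ η h1 h2 h3, r6 μ η h1 h2 h3, r7 μ η h1 h2 h3, r8 μ η h1 h2 h3, r9 μ η h1 h2 h3, r10 μ η h1 h2 h3, r11 μ η h1 h2 h3, r12 μ η h1 h2 h3, r13 μ η h1 h2 h3, r14 μ η h1 h2 h3, r15 μ η h1 h2 h3, r16 μ η h1 h2 h3, r17 μ η h1 h2 h3, r18 μ η h1 h2 h3, r19 μ η h1 h2 h3, r20 μ η h1 h2 h3, r21 μ η h1 h2 h3, r22 μ η h1 h2 h3, r23 μ η h1 h2 h3, r24 μ η h1 h2 h3, r25 μ η h1 h2 h3, r26 μ η h1 h2 h3, r27 μ η h1 h2 h3, r28 μ η h1 h2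 h3]

def tryR : List (Wd × Wd) → Wd → Option Wd
  | [], _ => none
  | r :: rs, w => if r.1.isPrefixOf w then some (r.2 ++ w.drop r.1.length) else tryR rs w

def rw1 : Wd → Option Wd
  | [] => none
  | l :: t =>
    match tryR rules (l :: t) with
    | some w' => some w'
    | none => (rw1 t).map (l :: ·)

def nf : Nat → Wd → Wd
  | 0, w => w
  | n+1, w =>
    match rw1 w with
    | none => w
    | some w' => nf n w'

section Sound
variable {G : Type*} [Group G] (μ η : G)

theorem ev_append (w₁ w₂ : Wd) (c : G) :
    ev μ η (w₁ ++ w₂) c = ev μ η w₁ (ev μ η w₂ c) := by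
  induction w₁ with
  | nil => rfl
  | cons l t ih => simp only [List.cons_append, ev, List.append_eq, ih]

theorem tryR_sound (hR : ∀ r ∈ rules, ∀ c : G, ev μ η r.1 c = ev μ η r.2 c) : ∀ (rs : List (Wd × Wd)), (∀ r ∈ rs, r ∈ rules) →
    ∀ w w', tryR rs w = some w' → ∀ c, ev μ η w' c = ev μ η w c := by
  intro rs hrs
  induction rs with
  | nil => intro w w' h; simp [tryR] at h
  | cons r rs ih =>
    intro w w' h c
    rw [tryR] at h
    split at h
    · next hp =>
      obtain ⟨t, rfl⟩ := List.isPrefixOf_iff_prefix.mp hp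
      cases h
      rw [List.drop_left, ev_append, ev_append, hR r (hrs r List.mem_cons_self)]
    · exact ih (fun r h => hrs _ (List.mem_cons_of_mem _ h)) w w' h c

theorem rw1_sound (hR : ∀ r ∈ rules, ∀ c : G, ev μ η r.1 c = ev μ η r.2 c) : ∀ w w', rw1 w = some w' → ∀ c, ev μ η w' c = ev μ η w c := by
  intro w
  induction w with
  | nil => intro w' h; simp [rw1] at h
  | cons l t ih =>
    intro w' h c
    rw [rw1] at h
    split at h
    · next w'' heq =>
      cases h
      exact tryR_sound μ η hR rules (fun r h => h) _ _ heq c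
    · next heq =>
      cases hrt : rw1 t with
      | none => rw [hrt] at h; simp at h
      | some t' =>
        rw [hrt] at h
        simp only [Option.map_some] at h
        cases h
        show gen μ η l * ev μ η t' c = gen μ η l * ev μ η t c
        rw [ih t' hrt c]

theorem nf_sound (hR : ∀ r ∈ rules, ∀ c : G, ev μ η r.1 c = ev μ η r.2 c) : ∀ n w (c : G), ev μ η (nf n w) c = ev μ η w c := by
  intro n
  induction n with
  | zero => intro w c; rfl
  | succ n ih =>
    intro w c
    rw [nf]
    split
    · rfl
    · next w' heq => rw [ih]; exact rw1_sound μ η hR _ _ heq c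

theorem ev_eq_of_nf (hR : ∀ r ∈ rules, ∀ c : G, ev μ η r.1 c = ev μ η r.2 c) {w₁ w₂ : Wd} (n : Nat) (h : nf n w₁ = nf n w₂) (c : G) :
    ev μ η w₁ c = ev μ η w₂ c := by
  rw [← nf_sound μ η hR n w₁ c, ← nf_sound μ η hR n w₂ c, h]

end Sound

theorem ev_hom {G H : Type*} [Group G] [Group H] (f : G →* H) (μ η : G) (w : Wd) (c : G) :
    f (ev μ η w c) = ev (f μ) (f η) w (f c) := by
  induction w with
  | nil => rfl
  | cons l t ih =>
    show f (gen μ η l * ev μ η t c) = gen (f μ) (f η) l * ev (f μ) (f η) t (f c)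
    rw [map_mul, ih]
    congr 1
    unfold gen
    split_ifs <;> simp [map_inv]

theorem ev_mem {G : Type*} [Group G] {x y : G} {S : Subgroup G} (hx : x ∈ S) (hy : y ∈ S) :
    ∀ (w : Wd) (c : G), c ∈ S → ev x y w c ∈ S := by
  intro w
  induction w with
  | nil => intro c hc; exact hc
  | cons l t ih =>
    intro c hc
    refine S.mul_mem ?_ (ih c hc)
    unfold gen
    split_ifs
    · exact hx
    · exact hy
    · exact S.inv_mem hy

open Equiv in
def pa : Equiv.Perm (Fin 5) := c[0, 1] * c[2, 3]
open Equiv in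
def pb : Equiv.Perm (Fin 5) := c[1, 2, 4]

def tblW : List Wd := [
  ([] : Wd),
  ([0] : Wd),
  ([1] : Wd),
  ([2] : Wd),
  ([0, 1] : Wd),
  ([0, 2] : Wd),
  ([1, 0] : Wd),
  ([2, 0] : Wd),
  ([0, 1, 0] : Wd),
  ([0, 2, 0] : Wd),
  ([1, 0, 1] : Wd),
  ([1, 0, 2] : Wd),
  ([2, 0, 1] : Wd),
  ([2, 0, 2] : Wd),
  ([0, 1, 0, 1] : Wd),
  ([0, 1, 0, 2] : Wd),
  ([0, 2, 0, 1] : Wd),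
  ([0, 2, 0, 2] : Wd),
  ([1, 0, 1, 0] : Wd),
  ([1, 0, 2, 0] : Wd),
  ([2, 0, 1, 0] : Wd),
  ([2, 0, 2, 0] : Wd),
  ([0, 1, 0, 1, 0] : Wd),
  ([0, 1, 0, 2, 0] : Wd),
  ([0, 2, 0, 1, 0] : Wd),
  ([0, 2, 0, 2, 0] : Wd),
  ([1, 0, 1, 0, 2] : Wd),
  ([1, 0, 2, 0, 1] : Wd),
  ([1, 0, 2, 0, 2] : Wd),
  ([2, 0, 1, 0, 1] : Wd),
  ([2, 0, 1, 0, 2] : Wd),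
  ([2, 0, 2, 0, 1] : Wd),
  ([0, 1, 0, 2, 0, 1] : Wd),
  ([0, 1, 0, 2, 0, 2] : Wd),
  ([0, 2, 0, 1, 0, 1] : Wd),
  ([0, 2, 0, 1, 0, 2] : Wd),
  ([1, 0, 1, 0, 2, 0] : Wd),
  ([1, 0, 2, 0, 1, 0] : Wd),
  ([2, 0, 1, 0, 2, 0] : Wd),
  ([2, 0, 2, 0, 1, 0] : Wd),
  ([0, 1, 0, 2, 0, 1, 0] : Wd),
  ([0, 2, 0, 1, 0, 2, 0] : Wd),
  ([1, 0, 1, 0, 2, 0, 1] : Wd),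
  ([1, 0, 1, 0, 2, 0, 2] : Wd),
  ([1, 0, 2, 0, 1, 0, 1] : Wd),
  ([1, 0, 2, 0, 1, 0, 2] : Wd),
  ([2, 0, 1, 0, 2, 0, 1] : Wd),
  ([2, 0, 1, 0, 2, 0, 2] : Wd),
  ([2, 0, 2, 0, 1, 0, 1] : Wd),
  ([2, 0, 2, 0, 1, 0, 2] : Wd),
  ([0, 1, 0, 2, 0, 1, 0, 1] : Wd),
  ([0, 1, 0, 2, 0, 1, 0, 2] : Wd),
  ([0, 2, 0, 1, 0, 2, 0, 1] : Wd),
  ([0, 2, 0, 1, 0, 2, 0, 2] : Wd),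
  ([1, 0, 2, 0, 1, 0, 2, 0] : Wd),
  ([2, 0, 1, 0, 2, 0, 1, 0] : Wd),
  ([0, 1, 0, 2, 0, 1, 0, 2, 0] : Wd),
  ([0, 2, 0, 1, 0, 2, 0, 1, 0] : Wd),
  ([1, 0, 2, 0, 1, 0, 2, 0, 1] : Wd),
  ([0, 1, 0, 2, 0, 1, 0, 2, 0, 1] : Wd)
]

def L : List (Equiv.Perm (Fin 5)) := tblW.map (fun w => ev pa pb w 1)

def wordOf (p : Equiv.Perm (Fin 5)) : Wd :=
  (tblW.find? (fun w => decide (ev pa pb w 1 = p))).getD []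

theorem wordOf_spec {p : Equiv.Perm (Fin 5)} (hp : p ∈ L) : ev pa pb (wordOf p) 1 = p := by
  obtain ⟨w, hw, hwp⟩ := List.mem_map.mp hp
  unfold wordOf
  cases hfind : tblW.find? (fun w => decide (ev pa pb w 1 = p)) with
  | none =>
    exact absurd (of_decide_eq_true (decide_eq_true hwp)) (by
      have := List.find?_eq_none.mp hfind w hw
      simp only [decide_eq_true_eq] at this
      exact fun _ => this hwp)
  | some w' =>
    have := List.find?_some hfind
    simp only [decide_eq_true_eq] at this
    simpa using this

theorem nodupL : L.Nodup := by decide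

theorem memA5 : ∀ p ∈ L, p ∈ alternatingGroup (Fin 5) := by
  have hs : ∀ p ∈ L, Equiv.Perm.sign p = 1 := by decide
  intro p hp
  exact Equiv.Perm.mem_alternatingGroup.mpr (hs p hp)

theorem cardA5 : Fintype.card (alternatingGroup (Fin 5)) = 60 := by
  have h := two_mul_card_alternatingGroup (α := Fin 5)
  rw [Fintype.card_perm, Fintype.card_fin] at h
  have h120 : Nat.factorial 5 = 120 := by norm_num [Nat.factorial]
  rw [h120] at h
  omega

theorem coverage : ∀ g : alternatingGroup (Fin 5), (g : Equiv.Perm (Fin 5)) ∈ L := by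
  classical
  have hF : L.toFinset.card = 60 := by
    rw [List.toFinset_card_of_nodup nodupL]; rfl
  let φ : {x // x ∈ L.toFinset} → alternatingGroup (Fin 5) :=
    fun x => ⟨x.1, memA5 x.1 (List.mem_toFinset.mp x.2)⟩
  have hinj : Function.Injective φ := by
    intro x y hxy
    have h2 : (φ x).1 = (φ y).1 := congrArg Subtype.val hxy
    exact Subtype.ext h2
  have hcard : Fintype.card {x // x ∈ L.toFinset} = Fintype.card (alternatingGroup (Fin 5)) := by
    rw [Fintype.card_coe, hF, cardA5]
  have hsurj := ((Fintype.bijective_iff_injective_and_card φ).mpr ⟨hinj, hcard⟩).surjective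
  intro g
  obtain ⟨x, hx⟩ := hsurj g
  have : (g : Equiv.Perm (Fin 5)) = x.1 := (congrArg Subtype.val hx).symm
  rw [this]
  exact List.mem_toFinset.mp x.2

theorem keyA : ∀ p ∈ L, nf 10 (wordOf (pa * p)) = nf 10 ((0 : Fin 3) :: wordOf p) := by decide

theorem keyB : ∀ p ∈ L, nf 10 (wordOf (pb * p)) = nf 10 ((1 : Fin 3) :: wordOf p) := by decide

theorem wordOf_one : wordOf 1 = [] := by decide
theorem wordOf_pa : wordOf pa = [0] := by decide
theorem wordOf_pb : wordOf pb = [1] := by decide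

theorem pa_mem : pa ∈ alternatingGroup (Fin 5) := by
  rw [Equiv.Perm.mem_alternatingGroup]; decide

theorem pb_mem : pb ∈ alternatingGroup (Fin 5) := by
  rw [Equiv.Perm.mem_alternatingGroup]; decide

attribute [irreducible] wordOf tblW L pa pb

end Rules

end A5Pres


set_option maxHeartbeats 1000000 in
open A5Pres in
/-- Any nontrivial group generated by two elements `μ, η` with `μ² = 1`, `η³ = 1`,
`(μη)⁵ = 1` is isomorphic to the alternating group `A₅`. -/
theorem iso_A5_of_relations (G : Type*) [Group G] (hG : Nontrivial G) (μ η : G)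
    (hgen : Subgroup.closure ({μ, η} : Set G) = ⊤)
    (h1 : μ ^ 2 = 1) (h2 : η ^ 3 = 1) (h3 : (μ * η) ^ 5 = 1) :
    Nonempty (G ≃* alternatingGroup (Fin 5)) := by
  classical
  have hR : ∀ r ∈ rules, ∀ c : G, ev μ η r.1 c = ev μ η r.2 c := rulesSound μ η h1 h2 h3
  set A5 := alternatingGroup (Fin 5) with hA5
  let α : A5 := ⟨pa, pa_mem⟩
  let β : A5 := ⟨pb, pb_mem⟩
  let fn : A5 → G := fun g => ev μ η (wordOf g.1) 1
  have hone : fn 1 = 1 := by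
    show ev μ η (wordOf (1 : Equiv.Perm (Fin 5))) 1 = 1
    rw [wordOf_one]
    rfl
  have hfα : fn α = μ := by
    show ev μ η (wordOf pa) 1 = μ
    rw [wordOf_pa]
    show μ * 1 = μ
    rw [mul_one]
  have hfβ : fn β = η := by
    show ev μ η (wordOf pb) 1 = η
    rw [wordOf_pb]
    show η * 1 = η
    rw [mul_one]
  have hA : ∀ g : A5, fn (α * g) = fn α * fn g := by
    intro g
    have hg : (g : Equiv.Perm (Fin 5)) ∈ L := coverage g
    have e1 : ev μ η (wordOf (pa * (g : Equiv.Perm (Fin 5)))) 1 =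
        ev μ η ((0 : Fin 3) :: wordOf (g : Equiv.Perm (Fin 5))) 1 :=
      ev_eq_of_nf μ η hR 10 (keyA _ hg) 1
    calc fn (α * g) = ev μ η ((0 : Fin 3) :: wordOf (g : Equiv.Perm (Fin 5))) 1 := e1
      _ = μ * ev μ η (wordOf (g : Equiv.Perm (Fin 5))) 1 := rfl
      _ = fn α * fn g := by rw [hfα]
  have hB : ∀ g : A5, fn (β * g) = fn β * fn g := by
    intro g
    have hg : (g : Equiv.Perm (Fin 5)) ∈ L := coverage g
    have e1 : ev μ η (wordOf (pb * (g : Equiv.Perm (Fin 5)))) 1 =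
        ev μ η ((1 : Fin 3) :: wordOf (g : Equiv.Perm (Fin 5))) 1 :=
      ev_eq_of_nf μ η hR 10 (keyB _ hg) 1
    calc fn (β * g) = ev μ η ((1 : Fin 3) :: wordOf (g : Equiv.Perm (Fin 5))) 1 := e1
      _ = η * ev μ η (wordOf (g : Equiv.Perm (Fin 5))) 1 := rfl
      _ = fn β * fn g := by rw [hfβ]
  let H : Subgroup A5 :=
    { carrier := {h | ∀ g, fn (h * g) = fn h * fn g}
      one_mem' := by
        intro g
        rw [one_mul, hone, one_mul]
      mul_mem' := by
        intro u v hu hv g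
        calc fn (u * v * g) = fn (u * (v * g)) := by rw [mul_assoc]
          _ = fn u * (fn v * fn g) := by rw [hu, hv]
          _ = fn u * fn v * fn g := (mul_assoc _ _ _).symm
          _ = fn (u * v) * fn g := by rw [← hu v]
      inv_mem' := by
        intro u hu g
        apply mul_left_cancel (a := fn u)
        calc fn u * fn (u⁻¹ * g) = fn (u * (u⁻¹ * g)) := (hu _).symm
          _ = fn g := by rw [mul_inv_cancel_left]
          _ = fn (u * u⁻¹) * fn g := by rw [mul_inv_cancel, hone, one_mul]
          _ = fn u * fn u⁻¹ * fn g := by rw [hu]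
          _ = fn u * (fn u⁻¹ * fn g) := mul_assoc _ _ _ }
  have closureAB : Subgroup.closure ({α, β} : Set A5) = ⊤ := by
    rw [eq_top_iff]
    intro g _
    have hg : (g : Equiv.Perm (Fin 5)) ∈ L := coverage g
    have hw := wordOf_spec hg
    have hcoe : ((ev α β (wordOf (g : Equiv.Perm (Fin 5))) 1 : A5) : Equiv.Perm (Fin 5)) =
        (g : Equiv.Perm (Fin 5)) := by
      exact (ev_hom ((alternatingGroup (Fin 5)).subtype) α β
        (wordOf (g : Equiv.Perm (Fin 5))) 1).trans hw
    have hgval : g = ev α β (wordOf (g : Equiv.Perm (Fin 5))) 1 := (Subtype.ext hcoe).symm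
    rw [hgval]
    have hx : α ∈ Subgroup.closure ({α, β} : Set A5) :=
      Subgroup.subset_closure (Set.mem_insert _ _)
    have hy : β ∈ Subgroup.closure ({α, β} : Set A5) :=
      Subgroup.subset_closure (Set.mem_insert_of_mem _ rfl)
    exact ev_mem hx hy (wordOf (g : Equiv.Perm (Fin 5))) 1 (Subgroup.one_mem _)
  have hHtop : ∀ u : A5, u ∈ H := by
    have hle : Subgroup.closure ({α, β} : Set A5) ≤ H := by
      apply (Subgroup.closure_le _).mpr
      rintro z (rfl | rfl)
      · exact hA
      · exact hB
    rw [closureAB] at hle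
    intro u
    exact hle (Subgroup.mem_top u)
  let f : A5 →* G := MonoidHom.mk' fn (fun u v => hHtop u v)
  have hsurj : Function.Surjective f := by
    have hle : (⊤ : Subgroup G) ≤ f.range := by
      rw [← hgen]
      apply (Subgroup.closure_le _).mpr
      rintro z (rfl | rfl)
      · exact ⟨α, hfα⟩
      · exact ⟨β, hfβ⟩
    intro x
    exact hle (Subgroup.mem_top x)
  have hinj : Function.Injective f := by
    rcases Subgroup.Normal.eq_bot_or_eq_top (MonoidHom.normal_ker f) with hk | hk
    · exact (MonoidHom.ker_eq_bot_iff f).mp hk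
    · exfalso
      obtain ⟨x, y, hxy⟩ := hG
      obtain ⟨u, hu⟩ := hsurj x
      obtain ⟨v, hv⟩ := hsurj y
      have hu1 : f u = 1 := by
        have : u ∈ f.ker := by rw [hk]; exact Subgroup.mem_top u
        exact this
      have hv1 : f v = 1 := by
        have : v ∈ f.ker := by rw [hk]; exact Subgroup.mem_top v
        exact this
      exact hxy (by rw [← hu, ← hv, hu1, hv1])
  exact ⟨(MulEquiv.ofBijective f ⟨hinj, hsurj⟩).symm⟩
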